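/- Let c ∈ (−1,1) and u, v ∈ ℂ. Then the function (γ,γ') ↦ exp( −|γ|² − |γ'|² + 2c·Re(γγ') + 2·Re(uγ) + 2·Re(vγ') ) is integrable on ℂ × ℂ (with respect to Lebesgue measure on ℂ ≅ ℝ² in each factor) and (1/π²) ∫_ℂ ∫_ℂ exp( −|γ|² − |γ'|² + 2c·Re(γγ') + 2·Re(uγ) + 2·Re(vγ') ) dγ dγ' = (1/(1−c²)) · exp( (|u|² + |v|² + 2c·Re(uv)) / (1−c²) ). -/

import Mathlib

open MeasureTheory

section AuxGauss
open Real


-- 1D Gaussian with linear term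
lemma gauss1_int {r : ℝ} (hr : 0 < r) (s : ℝ) :
    Integrable (fun x : ℝ => Real.exp (-r * x ^ 2 + s * x)) := by
  have h : (fun x : ℝ => Real.exp (-r * x ^ 2 + s * x))
      = fun x : ℝ => Real.exp (s ^ 2 / (4 * r)) * Real.exp (-r * (x - s / (2 * r)) ^ 2) := by
    funext x
    rw [← Real.exp_add]
    ring_nf
    congr 1
    field_simp
    ring
  rw [h]
  exact ((integrable_exp_neg_mul_sq hr).comp_sub_right (s / (2 * r))).const_mul _

lemma gauss1 {r : ℝ} (hr : 0 < r) (s : ℝ) :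
    ∫ x : ℝ, Real.exp (-r * x ^ 2 + s * x)
      = Real.sqrt (π / r) * Real.exp (s ^ 2 / (4 * r)) := by
  have h : (fun x : ℝ => Real.exp (-r * x ^ 2 + s * x))
      = fun x : ℝ => Real.exp (s ^ 2 / (4 * r)) * Real.exp (-r * (x - s / (2 * r)) ^ 2) := by
    funext x
    rw [← Real.exp_add]
    congr 1
    field_simp
    ring
  rw [h, integral_const_mul, integral_sub_right_eq_self (fun x => Real.exp (-r * x ^ 2)),
    integral_gaussian, mul_comm]

-- 2D Gaussian on ℂ
lemma gauss2_comp {r p q : ℝ} :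
    ((fun γ : ℂ => Real.exp (-r * γ.re ^ 2 - r * γ.im ^ 2 + 2 * p * γ.re + 2 * q * γ.im))
        ∘ ⇑Complex.measurableEquivRealProd.symm)
      = fun z : ℝ × ℝ => Real.exp (-r * z.1 ^ 2 + (2 * p) * z.1)
          * Real.exp (-r * z.2 ^ 2 + (2 * q) * z.2) := by
  funext z
  simp only [Function.comp, Complex.measurableEquivRealProd_symm_apply, ← Real.exp_add]
  ring_nf

lemma gauss2_int {r : ℝ} (hr : 0 < r) (p q : ℝ) :
    Integrable (fun γ : ℂ =>
      Real.exp (-r * γ.re ^ 2 - r * γ.im ^ 2 + 2 * p * γ.re + 2 * q * γ.im)) := by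
  rw [← (Complex.volume_preserving_equiv_real_prod.symm _).integrable_comp_emb
    Complex.measurableEquivRealProd.symm.measurableEmbedding]
  rw [gauss2_comp, Measure.volume_eq_prod]
  exact (gauss1_int hr (2 * p)).mul_prod (gauss1_int hr (2 * q))

lemma gauss2 {r : ℝ} (hr : 0 < r) (p q : ℝ) :
    ∫ γ : ℂ, Real.exp (-r * γ.re ^ 2 - r * γ.im ^ 2 + 2 * p * γ.re + 2 * q * γ.im)
      = (π / r) * Real.exp ((p ^ 2 + q ^ 2) / r) := by
  rw [← (Complex.volume_preserving_equiv_real_prod.symm _).integral_comp']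
  rw [show (fun z : ℝ × ℝ => Real.exp (-r * (Complex.measurableEquivRealProd.symm z).re ^ 2
        - r * (Complex.measurableEquivRealProd.symm z).im ^ 2
        + 2 * p * (Complex.measurableEquivRealProd.symm z).re
        + 2 * q * (Complex.measurableEquivRealProd.symm z).im)) = _ from gauss2_comp,
    Measure.volume_eq_prod,
    integral_prod_mul (fun x : ℝ => Real.exp (-r * x ^ 2 + 2 * p * x))
      (fun y : ℝ => Real.exp (-r * y ^ 2 + 2 * q * y)), gauss1 hr, gauss1 hr]
  rw [show √(π / r) * Real.exp ((2 * p) ^ 2 / (4 * r)) * (√(π / r) * Real.exp ((2 * q) ^ 2 / (4 * r)))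
      = (√(π / r) * √(π / r)) * (Real.exp ((2 * p) ^ 2 / (4 * r)) * Real.exp ((2 * q) ^ 2 / (4 * r))) by ring,
    Real.mul_self_sqrt (by positivity), ← Real.exp_add]
  congr 1
  field_simp
  ring

lemma gauss_abs_int {r : ℝ} (hr : 0 < r) (s : ℝ) :
    Integrable (fun x : ℝ => Real.exp (-r * x ^ 2 + s * |x|)) := by
  apply Integrable.mono' ((gauss1_int hr s).add (gauss1_int hr (-s)))
  · exact (Real.continuous_exp.comp (by fun_prop)).aestronglyMeasurable
  · filter_upwards with x
    rw [Real.norm_eq_abs, Real.abs_exp]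
    rcases le_or_gt 0 x with h | h
    · rw [abs_of_nonneg h]
      exact le_add_of_nonneg_right (Real.exp_pos _).le
    · rw [abs_of_neg h]
      calc Real.exp (-r * x ^ 2 + s * -x) = Real.exp (-r * x ^ 2 + -s * x) := by ring_nf
        _ ≤ _ := le_add_of_nonneg_left (Real.exp_pos _).le

lemma gaussC_abs_int {r : ℝ} (hr : 0 < r) (s : ℝ) :
    Integrable (fun γ : ℂ =>
      Real.exp (-r * γ.re ^ 2 + s * |γ.re|) * Real.exp (-r * γ.im ^ 2 + s * |γ.im|)) := by
  rw [← (Complex.volume_preserving_equiv_real_prod.symm _).integrable_comp_emb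
    Complex.measurableEquivRealProd.symm.measurableEmbedding]
  have : ((fun γ : ℂ =>
      Real.exp (-r * γ.re ^ 2 + s * |γ.re|) * Real.exp (-r * γ.im ^ 2 + s * |γ.im|))
        ∘ ⇑Complex.measurableEquivRealProd.symm)
      = fun z : ℝ × ℝ => Real.exp (-r * z.1 ^ 2 + s * |z.1|)
          * Real.exp (-r * z.2 ^ 2 + s * |z.2|) := rfl
  rw [this, Measure.volume_eq_prod]
  exact (gauss_abs_int hr s).mul_prod (gauss_abs_int hr s)

end AuxGauss

open Real in
/-- The coupled complex Gaussian integral underlying the closed-form no-click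
probabilities of the photonic DIQKD circuit. -/
theorem coupled_complex_gaussian_integral
    (c : ℝ) (hc : -1 < c) (hc' : c < 1) (u v : ℂ) :
    Integrable (fun p : ℂ × ℂ =>
      Real.exp (-‖p.1‖ ^ 2 - ‖p.2‖ ^ 2
        + 2 * c * (p.1 * p.2).re + 2 * (u * p.1).re + 2 * (v * p.2).re)) ∧
    (1 / Real.pi ^ 2) * ∫ p : ℂ × ℂ,
        Real.exp (-‖p.1‖ ^ 2 - ‖p.2‖ ^ 2
          + 2 * c * (p.1 * p.2).re + 2 * (u * p.1).re + 2 * (v * p.2).re) =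
      (1 / (1 - c ^ 2)) *
        Real.exp ((‖u‖ ^ 2 + ‖v‖ ^ 2 + 2 * c * (u * v).re)
          / (1 - c ^ 2)) := by
  have ht : |c| < 1 := abs_lt.mpr ⟨hc, hc'⟩
  have hr : (0 : ℝ) < 1 - |c| := by linarith
  have h1c : (0 : ℝ) < 1 - c ^ 2 := by nlinarith [abs_nonneg c, sq_abs c]
  -- Integrability
  have hint : Integrable (fun p : ℂ × ℂ =>
      Real.exp (-‖p.1‖ ^ 2 - ‖p.2‖ ^ 2
        + 2 * c * (p.1 * p.2).re + 2 * (u * p.1).re + 2 * (v * p.2).re)) := by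
    apply Integrable.mono' (g := fun p : ℂ × ℂ =>
      (Real.exp (-(1 - |c|) * p.1.re ^ 2 + 2 * ‖u‖ * |p.1.re|)
        * Real.exp (-(1 - |c|) * p.1.im ^ 2 + 2 * ‖u‖ * |p.1.im|))
      * (Real.exp (-(1 - |c|) * p.2.re ^ 2 + 2 * ‖v‖ * |p.2.re|)
        * Real.exp (-(1 - |c|) * p.2.im ^ 2 + 2 * ‖v‖ * |p.2.im|)))
    · rw [Measure.volume_eq_prod]
      exact (gaussC_abs_int hr _).mul_prod (gaussC_abs_int hr _)
    · have : Continuous (fun p : ℂ × ℂ =>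
        -‖p.1‖ ^ 2 - ‖p.2‖ ^ 2
          + 2 * c * (p.1 * p.2).re + 2 * (u * p.1).re + 2 * (v * p.2).re) := by
        have h1 : Continuous fun p : ℂ × ℂ => ‖p.1‖ :=
          continuous_norm.comp continuous_fst
        have h2 : Continuous fun p : ℂ × ℂ => ‖p.2‖ :=
          continuous_norm.comp continuous_snd
        fun_prop
      exact (Real.continuous_exp.comp this).aestronglyMeasurable
    · filter_upwards with p
      rw [Real.norm_eq_abs, Real.abs_exp, ← Real.exp_add, ← Real.exp_add, ← Real.exp_add]
      apply Real.exp_le_exp.mpr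
      simp only [Complex.sq_norm, Complex.normSq_apply, Complex.mul_re]
      set x := p.1.re; set y := p.1.im; set x' := p.2.re; set y' := p.2.im
      have hx : c * (x * x') ≤ |c| * (|x| * |x'|) := by
        calc c * (x * x') ≤ |c * (x * x')| := le_abs_self _
          _ = |c| * (|x| * |x'|) := by rw [abs_mul, abs_mul]
      have hy : -(c * (y * y')) ≤ |c| * (|y| * |y'|) := by
        calc -(c * (y * y')) ≤ |(-(c * (y * y')))| := le_abs_self _
          _ = |c| * (|y| * |y'|) := by rw [abs_neg, abs_mul, abs_mul]
      have hu1 : u.re * x ≤ ‖u‖ * |x| := by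
        calc u.re * x ≤ |u.re * x| := le_abs_self _
          _ = |u.re| * |x| := abs_mul _ _
          _ ≤ ‖u‖ * |x| := by
            exact mul_le_mul_of_nonneg_right (Complex.abs_re_le_norm u) (abs_nonneg x)
      have hu2 : -(u.im * y) ≤ ‖u‖ * |y| := by
        calc -(u.im * y) ≤ |(-(u.im * y))| := le_abs_self _
          _ = |u.im| * |y| := by rw [abs_neg, abs_mul]
          _ ≤ ‖u‖ * |y| := by
            exact mul_le_mul_of_nonneg_right (Complex.abs_im_le_norm u) (abs_nonneg y)
      have hv1 : v.re * x' ≤ ‖v‖ * |x'| := by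
        calc v.re * x' ≤ |v.re * x'| := le_abs_self _
          _ = |v.re| * |x'| := abs_mul _ _
          _ ≤ ‖v‖ * |x'| := by
            exact mul_le_mul_of_nonneg_right (Complex.abs_re_le_norm v) (abs_nonneg x')
      have hv2 : -(v.im * y') ≤ ‖v‖ * |y'| := by
        calc -(v.im * y') ≤ |(-(v.im * y'))| := le_abs_self _
          _ = |v.im| * |y'| := by rw [abs_neg, abs_mul]
          _ ≤ ‖v‖ * |y'| := by
            exact mul_le_mul_of_nonneg_right (Complex.abs_im_le_norm v) (abs_nonneg y')
      nlinarith [mul_nonneg (abs_nonneg c) (sq_nonneg (|x| - |x'|)),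
        mul_nonneg (abs_nonneg c) (sq_nonneg (|y| - |y'|)),
        sq_abs x, sq_abs x', sq_abs y, sq_abs y']
  refine ⟨hint, ?_⟩
  have hint' := hint
  rw [Measure.volume_eq_prod] at hint'
  rw [Measure.volume_eq_prod, integral_prod _ hint']
  have inner : ∀ γ : ℂ, (∫ γ' : ℂ, Real.exp (-‖γ‖ ^ 2 - ‖γ'‖ ^ 2
        + 2 * c * (γ * γ').re + 2 * (u * γ).re + 2 * (v * γ').re))
      = (π * Real.exp (‖v‖ ^ 2)) *
        Real.exp (-(1 - c ^ 2) * γ.re ^ 2 - (1 - c ^ 2) * γ.im ^ 2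
          + 2 * (u.re + c * v.re) * γ.re + 2 * (c * v.im - u.im) * γ.im) := by
    intro γ
    have h1 : (fun γ' : ℂ => Real.exp (-‖γ‖ ^ 2 - ‖γ'‖ ^ 2
          + 2 * c * (γ * γ').re + 2 * (u * γ).re + 2 * (v * γ').re))
        = fun γ' : ℂ => Real.exp (-‖γ‖ ^ 2 + 2 * (u * γ).re)
          * Real.exp (-1 * γ'.re ^ 2 - 1 * γ'.im ^ 2
              + 2 * (c * γ.re + v.re) * γ'.re + 2 * (-(c * γ.im) - v.im) * γ'.im) := by
      funext γ'
      rw [← Real.exp_add]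
      congr 1
      simp only [Complex.sq_norm, Complex.normSq_apply, Complex.mul_re]
      ring
    rw [h1, integral_const_mul, gauss2 one_pos, div_one, div_one,
      show Real.exp (-‖γ‖ ^ 2 + 2 * (u * γ).re)
          * (π * Real.exp ((c * γ.re + v.re) ^ 2 + (-(c * γ.im) - v.im) ^ 2))
        = π * Real.exp ((-‖γ‖ ^ 2 + 2 * (u * γ).re)
            + ((c * γ.re + v.re) ^ 2 + (-(c * γ.im) - v.im) ^ 2)) by
        rw [mul_left_comm, ← Real.exp_add],
      show (π * Real.exp (‖v‖ ^ 2)) *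
          Real.exp (-(1 - c ^ 2) * γ.re ^ 2 - (1 - c ^ 2) * γ.im ^ 2
            + 2 * (u.re + c * v.re) * γ.re + 2 * (c * v.im - u.im) * γ.im)
        = π * Real.exp (‖v‖ ^ 2
            + (-(1 - c ^ 2) * γ.re ^ 2 - (1 - c ^ 2) * γ.im ^ 2
              + 2 * (u.re + c * v.re) * γ.re + 2 * (c * v.im - u.im) * γ.im)) by
        rw [mul_assoc, ← Real.exp_add]]
    congr 1
    simp only [Complex.sq_norm, Complex.normSq_apply, Complex.mul_re]
    ring
  simp_rw [inner, integral_const_mul, gauss2 h1c]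
  rw [show (1 : ℝ) / π ^ 2 * ((π * Real.exp (‖v‖ ^ 2)) * (π / (1 - c ^ 2)
        * Real.exp (((u.re + c * v.re) ^ 2 + (c * v.im - u.im) ^ 2) / (1 - c ^ 2))))
      = (1 / (1 - c ^ 2)) * Real.exp (‖v‖ ^ 2
          + ((u.re + c * v.re) ^ 2 + (c * v.im - u.im) ^ 2) / (1 - c ^ 2)) by
      rw [Real.exp_add]
      have hπ : π ≠ 0 := Real.pi_ne_zero
      have h2 : (1 - c ^ 2) ≠ 0 := ne_of_gt h1c
      field_simp]
  congr 1
  simp only [Complex.sq_norm, Complex.normSq_apply, Complex.mul_re]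
  field_simp
  ring
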